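/- Let E be a real Banach space, y₀ ∈ E, 0 ≤ ε < 1, let T₀ : E ≃L[ℝ] E be a continuous linear equivalence, and let f : E → E and Df : E → (E →L[ℝ] E) be such that Df y₀ = T₀ (as a map), Df is a Gateaux derivative of f on the closed ball of radius 2 centred at y₀, and for every y in that closed ball (Df y − Df y₀) '' closedBall 0 1 ⊆ ε • ((Df y₀) '' closedBall 0 1). Then f is injective on the closed ball of radius 2 centred at y₀: if y₁, y₂ lie in that ball and f y₁ = f y₂, then y₁ = y₂. -/
import Mathlib


open Pointwise Metric

variable {E : Type*} [NormedAddCommGroup E] [NormedSpace ℝ E]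

/-- `Df` is a Gateaux derivative of `f` on the set `S`: for every `y ∈ S` and every
direction `v`, the map `t ↦ f (y + t • v)` has derivative `Df y v` at `t = 0`. -/
def HasGateauxDerivOn (f : E → E) (Df : E → E →L[ℝ] E) (S : Set E) : Prop :=
  ∀ y ∈ S, ∀ v : E, HasDerivAt (fun t : ℝ => f (y + t • v)) (Df y v) 0

/-- with `Df y₀ = T₀` a continuous linear equivalence, `0 ≤ ε < 1`, and the
Colombeau-type condition on the closed ball of radius 2 about `y₀`, the map `f` is injective
on that ball. -/
theorem stmt5 [CompleteSpace E] (y₀ : E) (ε : ℝ) (hε0 : 0 ≤ ε) (hε1 : ε < 1)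
    (T₀ : E ≃L[ℝ] E) (f : E → E) (Df : E → E →L[ℝ] E)
    (hDfy₀ : ⇑(Df y₀) = ⇑T₀)
    (hgat : HasGateauxDerivOn f Df (closedBall y₀ 2))
    (hcolo : ∀ y ∈ closedBall y₀ 2,
      ⇑(Df y - Df y₀) '' closedBall (0 : E) 1 ⊆ ε • (⇑(Df y₀) '' closedBall (0 : E) 1)) :
    ∀ y₁ ∈ closedBall y₀ 2, ∀ y₂ ∈ closedBall y₀ 2, f y₁ = f y₂ → y₁ = y₂ := by
  intro y₁ hy₁ y₂ hy₂ hf12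
  by_contra hne
  set v : E := y₂ - y₁ with hv
  have hvne : v ≠ 0 := sub_ne_zero.2 (fun h => hne h.symm)
  have hvpos : 0 < ‖v‖ := norm_pos_iff.2 hvne
  -- membership of segment
  have hmem : ∀ t ∈ Set.Icc (0:ℝ) 1, y₁ + t • v ∈ closedBall y₀ 2 := by
    intro t ht
    exact (convex_closedBall y₀ 2).add_smul_sub_mem hy₁ hy₂ ht
  -- derivative of φ at each t in [0,1]
  have hderiv : ∀ t ∈ Set.Icc (0:ℝ) 1,
      HasDerivAt (fun s : ℝ => f (y₁ + s • v)) (Df (y₁ + t • v) v) t := by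
    intro t ht
    have h0 := hgat (y₁ + t • v) (hmem t ht) v
    have hlin : HasDerivAt (fun s : ℝ => s - t) 1 t := by
      simpa using (hasDerivAt_id t).sub_const t
    have := HasDerivAt.scomp_of_eq (x := t) (h := fun s : ℝ => s - t) h0 hlin (by ring)
    simp only [one_smul] at this
    convert this using 2 with s
    simp [Function.comp, add_smul, sub_smul]
  -- bound on the perturbation
  have hbound : ∀ y ∈ closedBall y₀ 2, ‖T₀.symm ((Df y - Df y₀) v)‖ ≤ ε * ‖v‖ := by
    intro y hy
    have hu : ‖v‖⁻¹ • v ∈ closedBall (0:E) 1 := by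
      simp [norm_smul, abs_of_nonneg (inv_nonneg.2 (norm_nonneg v)),
        inv_mul_le_one₀ hvpos]
    obtain ⟨z, hz, hz2⟩ := hcolo y hy ⟨_, hu, rfl⟩
    obtain ⟨w, hw, rfl⟩ := hz
    have hzval : (Df y - Df y₀) (‖v‖⁻¹ • v) = ε • T₀ w := by
      rw [← hz2, hDfy₀]
    have hval : T₀.symm ((Df y - Df y₀) (‖v‖⁻¹ • v)) = ε • w := by
      rw [hzval, map_smul, T₀.symm_apply_apply]
    have hsc : T₀.symm ((Df y - Df y₀) v) = ‖v‖ • (ε • w) := by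
      rw [← hval, ← map_smul, ← map_smul, smul_inv_smul₀ (ne_of_gt hvpos)]
    rw [hsc, norm_smul, norm_smul, Real.norm_eq_abs, Real.norm_eq_abs,
      abs_of_nonneg (norm_nonneg v), abs_of_nonneg hε0]
    calc ‖v‖ * (ε * ‖w‖) ≤ ‖v‖ * (ε * 1) := by
          gcongr
          exact mem_closedBall_zero_iff.1 hw
      _ = ε * ‖v‖ := by ring
  -- auxiliary function g
  set g : ℝ → E := fun t => T₀.symm (f (y₁ + t • v)) - t • v with hg
  have hgderiv : ∀ t ∈ Set.Icc (0:ℝ) 1,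
      HasDerivWithinAt g (T₀.symm ((Df (y₁ + t • v) - Df y₀) v)) (Set.Icc (0:ℝ) 1) t := by
    intro t ht
    have h1 : HasDerivAt (fun s : ℝ => T₀.symm (f (y₁ + s • v)))
        (T₀.symm (Df (y₁ + t • v) v)) t :=
      (T₀.symm.toContinuousLinearMap.hasFDerivAt.comp_hasDerivAt t (hderiv t ht))
    have h2 : HasDerivAt (fun s : ℝ => s • v) v t := by
      simpa using (hasDerivAt_id t).smul_const v
    have h3 := h1.sub h2
    have : T₀.symm (Df (y₁ + t • v) v) - v = T₀.symm ((Df (y₁ + t • v) - Df y₀) v) := by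
      have : (Df y₀) v = T₀ v := by rw [hDfy₀]
      simp [ContinuousLinearMap.sub_apply, map_sub, this, T₀.symm_apply_apply]
    rw [this] at h3
    exact h3.hasDerivWithinAt
  have hkey : ‖g 1 - g 0‖ ≤ ε * ‖v‖ := by
    have := norm_image_sub_le_of_norm_deriv_le_segment' (C := ε * ‖v‖) hgderiv
      (fun t ht => hbound _ (hmem t (Set.Ico_subset_Icc_self ht))) 1
      (Set.right_mem_Icc.2 zero_le_one)
    simpa using this
  have hg10 : g 1 - g 0 = -v := by
    simp only [hg, one_smul, zero_smul, add_zero, sub_zero]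
    have : y₁ + v = y₂ := by simp [hv]
    rw [this, ← hf12]
    abel
  rw [hg10, norm_neg] at hkey
  nlinarith
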